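/- Commutation criterion for string operators (Eq. (14)). Let δ be a configuration, F : (E → ZMod 2) → ℂ arbitrary, and (α_p, b_p) a plaquette. The string-type operator S = B(δ, F) commutes with the plaquette operator B(α_p, b_p) if and only if F(c + α_p) · b_p(c) = b_p(c + δ) · F(c) for every configuration c (the paper's constraint F_P(i ⊕ α^p) = (b_p(i ⊕ α^P)/b_p(i)) · F_P(i)). -/

import Mathlib

/-- A plaquette: a flip pattern `α_p` together with a unit-modulus phase function `b_p`. -/
structure Plaquette (E : Type*) where
  flip : E → ZMod 2
  phase : (E → ZMod 2) → ℂ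
  unit_phase : ∀ c, ‖phase c‖ = 1

/-- The string-type operator `B(α, F)`, acting on the Hilbert space
`H = EuclideanSpace ℂ (E → ZMod 2)` by `(B(α,F) ψ)(c) = F(c + α) ⬝ ψ(c + α)`,
i.e. `B(α,F) δ_c = F(c) • δ_{c+α}`. -/
noncomputable def stringOp {E : Type*} [Fintype E] [DecidableEq E]
    (α : E → ZMod 2) (F : (E → ZMod 2) → ℂ) :
    EuclideanSpace ℂ (E → ZMod 2) →ₗ[ℂ] EuclideanSpace ℂ (E → ZMod 2) where
  toFun ψ := WithLp.toLp 2 (fun c => F (c + α) * ψ (c + α))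
  map_add' ψ φ := by
    ext c
    simp [mul_add]
  map_smul' a ψ := by
    ext c
    simp [mul_comm, mul_left_comm, mul_assoc]

/-- Commutation criterion for string operators (Eq. (14)): the string-type operator
`S = B(δ, F)` commutes with the plaquette operator `B(α_p, b_p)` if and only if
`F(c + α_p) · b_p(c) = b_p(c + δ) · F(c)` for every configuration `c`. -/
theorem stringOp_commute_plaquette_iff {E : Type*} [Fintype E] [DecidableEq E]
    (δ : E → ZMod 2) (F : (E → ZMod 2) → ℂ) (p : Plaquette E) :
    stringOp δ F ∘ₗ stringOp p.flip p.phase = stringOp p.flip p.phase ∘ₗ stringOp δ F ↔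
      ∀ c : E → ZMod 2, F (c + p.flip) * p.phase c = p.phase (c + δ) * F c := by
  have hself : ∀ a : E → ZMod 2, a + a = 0 := by
    intro a; funext i; exact CharTwo.add_self_eq_zero _
  have hc : ∀ a b : E → ZMod 2, a + b + b = a := by
    intro a b; rw [add_assoc, hself, add_zero]
  constructor
  · intro h c
    have := congrFun (congrArg (fun T => (⇑(T (EuclideanSpace.single c 1) : EuclideanSpace ℂ (E → ZMod 2)) : (E → ZMod 2) → ℂ)) h) (c + p.flip + δ)
    simp only [LinearMap.comp_apply, stringOp, LinearMap.coe_mk, AddHom.coe_mk, PiLp.toLp_apply] at this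
    rw [show c + p.flip + δ + δ + p.flip = c by rw [hc, hc],
        show c + p.flip + δ + δ = c + p.flip from hc _ _,
        show c + p.flip + δ + p.flip + δ = c by
          calc c + p.flip + δ + p.flip + δ = c + δ + δ + p.flip + p.flip := by abel
          _ = c := by rw [hc, hc],
        show c + p.flip + δ + p.flip = c + δ by
          calc c + p.flip + δ + p.flip = c + δ + p.flip + p.flip := by abel
          _ = c + δ := hc _ _] at this
    simpa [EuclideanSpace.single_apply, mul_comm, mul_left_comm, mul_assoc] using this
  · intro h
    ext ψ c
    simp only [LinearMap.comp_apply, stringOp, LinearMap.coe_mk, AddHom.coe_mk, PiLp.toLp_apply]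
    have key := h (c + p.flip + δ)
    rw [show c + p.flip + δ + p.flip = c + δ by
          calc c + p.flip + δ + p.flip = c + δ + p.flip + p.flip := by abel
          _ = c + δ := hc _ _,
        show c + p.flip + δ + δ = c + p.flip from hc _ _] at key
    have : c + δ + p.flip = c + p.flip + δ := by abel
    rw [this]
    rw [← mul_assoc, ← mul_assoc, mul_comm (F (c + δ)) (p.phase (c + p.flip + δ)), ← key]
    ring
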